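/- arXiv:1404.5178 — 3 statements merged into one kernel-verified Lean document; each statement's English description precedes it below -/
import Mathlib

section
/- Let ℓ ≥ 3 be a prime and k a positive integer with k ≤ ℓ − 2. The set M_{k,ℓ} := { j ∈ (ℤ/ℓℤ)* : ⟨kj⟩_ℓ + ⟨j⟩_ℓ < ℓ } has cardinality (ℓ − 1)/2. -/
/-- For a prime `ℓ ≥ 3` and `1 ≤ k ≤ ℓ - 2`, the set
`M_{k,ℓ} = {j ∈ (ℤ/ℓℤ)* : ⟨kj⟩_ℓ + ⟨j⟩_ℓ < ℓ}` has cardinality `(ℓ-1)/2`. -/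
theorem stmt0 (ℓ : ℕ) [Fact ℓ.Prime] (hℓ : 3 ≤ ℓ) (k : ℕ) (hk1 : 1 ≤ k)
    (hk2 : k ≤ ℓ - 2) :
    Nat.card {j : (ZMod ℓ)ˣ //
      ((k : ZMod ℓ) * (j : ZMod ℓ)).val + (j : ZMod ℓ).val < ℓ} = (ℓ - 1) / 2 := by
  have hp : ℓ.Prime := Fact.out
  haveI : NeZero ℓ := ⟨hp.ne_zero⟩
  have hkne : (k : ZMod ℓ) ≠ 0 := by
    rw [Ne, ZMod.natCast_eq_zero_iff]
    intro h
    have := Nat.le_of_dvd (by omega) h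
    omega
  set p : (ZMod ℓ)ˣ → Prop := fun j =>
    ((k : ZMod ℓ) * (j : ZMod ℓ)).val + (j : ZMod ℓ).val < ℓ with hpdef
  -- basic facts about vals
  have hval : ∀ j : (ZMod ℓ)ˣ,
      ((k : ZMod ℓ) * ((-j : (ZMod ℓ)ˣ) : ZMod ℓ)).val
        + ((-j : (ZMod ℓ)ˣ) : ZMod ℓ).val
      = 2 * ℓ - (((k : ZMod ℓ) * (j : ZMod ℓ)).val + (j : ZMod ℓ).val) ∧
      ((k : ZMod ℓ) * (j : ZMod ℓ)).val + (j : ZMod ℓ).val ≠ ℓ ∧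
      0 < ((k : ZMod ℓ) * (j : ZMod ℓ)).val ∧
      ((k : ZMod ℓ) * (j : ZMod ℓ)).val < ℓ ∧
      0 < (j : ZMod ℓ).val ∧ (j : ZMod ℓ).val < ℓ := by
    intro j
    have hjne : (j : ZMod ℓ) ≠ 0 := j.ne_zero
    have hkjne : (k : ZMod ℓ) * (j : ZMod ℓ) ≠ 0 := mul_ne_zero hkne hjne
    have h1 : (j : ZMod ℓ).val < ℓ := ZMod.val_lt _
    have h2 : ((k : ZMod ℓ) * (j : ZMod ℓ)).val < ℓ := ZMod.val_lt _
    have h3 : 0 < (j : ZMod ℓ).val :=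
      Nat.pos_of_ne_zero (fun h => hjne ((ZMod.val_eq_zero _).mp h))
    have h4 : 0 < ((k : ZMod ℓ) * (j : ZMod ℓ)).val :=
      Nat.pos_of_ne_zero (fun h => hkjne ((ZMod.val_eq_zero _).mp h))
    refine ⟨?_, ?_, h4, h2, h3, h1⟩
    · have hnegj : ((-j : (ZMod ℓ)ˣ) : ZMod ℓ) = -(j : ZMod ℓ) := Units.val_neg j
      have hnv : (-(j : ZMod ℓ)).val = ℓ - (j : ZMod ℓ).val := by
        rw [ZMod.neg_val, if_neg hjne]
      have hknv : ((k : ZMod ℓ) * -(j : ZMod ℓ)).val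
          = ℓ - ((k : ZMod ℓ) * (j : ZMod ℓ)).val := by
        rw [mul_neg, ZMod.neg_val, if_neg hkjne]
      rw [hnegj, hknv, hnv]
      omega
    · intro hsum
      -- then kj = -j, so k = -1, contradiction with k ≤ ℓ - 2
      have : ((k : ZMod ℓ) * (j : ZMod ℓ)).val = (-(j : ZMod ℓ)).val := by
        rw [ZMod.neg_val, if_neg hjne]; omega
      have heq : (k : ZMod ℓ) * (j : ZMod ℓ) = -(j : ZMod ℓ) :=
        ZMod.val_injective ℓ this
      have hk : (k : ZMod ℓ) = -1 := by
        have := mul_right_cancel₀ hjne (by rw [heq]; ring : (k : ZMod ℓ) * j = -1 * j)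
        exact this
      have : ((k + 1 : ℕ) : ZMod ℓ) = 0 := by push_cast [hk]; ring
      rw [ZMod.natCast_eq_zero_iff] at this
      have := Nat.le_of_dvd (by omega) this
      omega
  have key : ∀ j : (ZMod ℓ)ˣ, p j ↔ ¬ p (-j) := by
    intro j
    obtain ⟨he, hne, h4, h2, h3, h1⟩ := hval j
    simp only [hpdef, he]
    omega
  -- equivalence between the set and its complement
  let e : {j : (ZMod ℓ)ˣ // p j} ≃ {j : (ZMod ℓ)ˣ // ¬ p j} :=
    { toFun := fun x => ⟨-x.1, (key x.1).mp x.2⟩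
      invFun := fun x => ⟨-x.1, by
        have h := key (-x.1)
        rw [neg_neg] at h
        exact h.mpr x.2⟩
      left_inv := fun x => by simp
      right_inv := fun x => by simp }
  have hcard : Nat.card {j : (ZMod ℓ)ˣ // p j} = Nat.card {j : (ZMod ℓ)ˣ // ¬ p j} :=
    Nat.card_congr e
  have htot : Nat.card {j : (ZMod ℓ)ˣ // p j} + Nat.card {j : (ZMod ℓ)ˣ // ¬ p j}
      = ℓ - 1 := by
    classical
    rw [Nat.card_eq_fintype_card, Nat.card_eq_fintype_card,
      Fintype.card_subtype_compl]
    have hu : Fintype.card (ZMod ℓ)ˣ = ℓ - 1 := by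
      rw [ZMod.card_units_eq_totient, Nat.totient_prime hp]
    have hle : Fintype.card {j : (ZMod ℓ)ˣ // p j} ≤ Fintype.card (ZMod ℓ)ˣ :=
      Fintype.card_subtype_le _
    omega
  show Nat.card {j : (ZMod ℓ)ˣ // p j} = (ℓ - 1) / 2
  omega
end

section
/- Let a ≥ 1, d ≥ 1 with not both a = 1 and d = 1, let b ≥ 0 and e ≥ 1 with not both b = 0 and e = 1, and suppose 3 ∤ d and 3 ∤ e. Then the polynomials Φ_{3^a d}(X) and Φ_{3^b e}(−X² − X) have no common complex root; consequently their resultant is nonzero. -/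
open Polynomial

/-- The resultant of two polynomials, as the determinant of their Sylvester matrix. -/
noncomputable def sylvesterResultant {R : Type*} [CommRing R] (p q : Polynomial R) : R :=
  (Matrix.of fun (i j : Fin (q.natDegree + p.natDegree)) =>
    if (i : ℕ) < q.natDegree then
      (if (i : ℕ) ≤ (j : ℕ) then p.coeff ((j : ℕ) - (i : ℕ)) else 0)
    else
      (if (i : ℕ) - q.natDegree ≤ (j : ℕ) then
        q.coeff ((j : ℕ) - ((i : ℕ) - q.natDegree)) else 0)).det

lemma det_cast_aux {S : Type*} [CommRing S] {n n' : ℕ} (h : n = n')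
    (A : Matrix (Fin n) (Fin n) S) (B : Matrix (Fin n') (Fin n') S)
    (hAB : ∀ i j : Fin n', A ⟨(i : ℕ), h ▸ i.isLt⟩ ⟨(j : ℕ), h ▸ j.isLt⟩ = B i j) :
    A.det = B.det := by
  subst h
  have : A = B := by
    ext i j
    simpa using hAB i j
  rw [this]

lemma sylvesterResultant_map {R S : Type*} [CommRing R] [CommRing S] (f : R →+* S)
    (p q : Polynomial R) (hp : (p.map f).natDegree = p.natDegree)
    (hq : (q.map f).natDegree = q.natDegree) :
    f (sylvesterResultant p q) = sylvesterResultant (p.map f) (q.map f) := by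
  unfold sylvesterResultant
  rw [RingHom.map_det]
  apply det_cast_aux (by rw [hp, hq])
  intro i j
  simp only [RingHom.mapMatrix_apply, Matrix.map_apply, Matrix.of_apply, hp, hq, coeff_map,
    apply_ite f, map_zero]

lemma sylvesterResultant_ne_zero_of_isCoprime {K : Type*} [Field K] {p q : Polynomial K}
    (hp : p ≠ 0) (hco : IsCoprime p q) : sylvesterResultant p q ≠ 0 := by
  intro hdet
  unfold sylvesterResultant at hdet
  obtain ⟨c, hc0, hc⟩ := Matrix.exists_vecMul_eq_zero_iff.2 hdet
  have hup : ∀ j : ℕ, ((∑ i : Fin (q.natDegree + p.natDegree),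
        if (i : ℕ) < q.natDegree then C (c i) * X ^ (i : ℕ) else 0) * p).coeff j
      = ∑ i : Fin (q.natDegree + p.natDegree), if (i : ℕ) < q.natDegree then
          c i * (if (i : ℕ) ≤ j then p.coeff (j - (i : ℕ)) else 0) else 0 := by
    intro j
    rw [Finset.sum_mul, finset_sum_coeff]
    refine Finset.sum_congr rfl fun i _ => ?_
    by_cases h : (i : ℕ) < q.natDegree
    · rw [if_pos h, if_pos h, mul_assoc, mul_comm (X ^ (i : ℕ)) p, coeff_C_mul,
        coeff_mul_X_pow']
    · simp [h]
  have hvq : ∀ j : ℕ, ((∑ i : Fin (q.natDegree + p.natDegree),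
        if q.natDegree ≤ (i : ℕ) then C (c i) * X ^ ((i : ℕ) - q.natDegree) else 0) * q).coeff j
      = ∑ i : Fin (q.natDegree + p.natDegree), if q.natDegree ≤ (i : ℕ) then
          c i * (if (i : ℕ) - q.natDegree ≤ j then q.coeff (j - ((i : ℕ) - q.natDegree))
            else 0) else 0 := by
    intro j
    rw [Finset.sum_mul, finset_sum_coeff]
    refine Finset.sum_congr rfl fun i _ => ?_
    by_cases h : q.natDegree ≤ (i : ℕ)
    · rw [if_pos h, if_pos h, mul_assoc, mul_comm (X ^ ((i : ℕ) - q.natDegree)) q,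
        coeff_C_mul, coeff_mul_X_pow']
    · simp [h]
  have key : (∑ i : Fin (q.natDegree + p.natDegree),
        if (i : ℕ) < q.natDegree then C (c i) * X ^ (i : ℕ) else 0) * p
      + (∑ i : Fin (q.natDegree + p.natDegree),
        if q.natDegree ≤ (i : ℕ) then C (c i) * X ^ ((i : ℕ) - q.natDegree) else 0) * q
      = 0 := by
    ext j
    rw [coeff_add, coeff_zero, hup, hvq, ← Finset.sum_add_distrib]
    by_cases hj : j < q.natDegree + p.natDegree
    · have hcj := congrFun hc ⟨j, hj⟩
      simp only [Matrix.vecMul, dotProduct, Matrix.of_apply, Pi.zero_apply] at hcj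
      refine Eq.trans (Finset.sum_congr rfl fun i _ => ?_) hcj
      rcases lt_or_ge (i : ℕ) q.natDegree with h | h
      · rw [if_pos h, if_neg (not_le.2 h), add_zero, if_pos h]
      · rw [if_neg (not_lt.2 h), if_pos h, zero_add, if_neg (not_lt.2 h)]
    · refine Finset.sum_eq_zero fun i _ => ?_
      have hi := i.isLt
      have h1 : (if (i : ℕ) < q.natDegree then
          c i * (if (i : ℕ) ≤ j then p.coeff (j - (i : ℕ)) else 0) else 0) = 0 := by
        split_ifs with h h'
        · rw [coeff_eq_zero_of_natDegree_lt (by omega), mul_zero]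
        · rw [mul_zero]
        · rfl
      have h2 : (if q.natDegree ≤ (i : ℕ) then
          c i * (if (i : ℕ) - q.natDegree ≤ j then
            q.coeff (j - ((i : ℕ) - q.natDegree)) else 0) else 0) = 0 := by
        split_ifs with h h'
        · rw [coeff_eq_zero_of_natDegree_lt (by omega), mul_zero]
        · rw [mul_zero]
        · rfl
      rw [h1, h2, add_zero]
  have hvcoeff : ∀ k, p.natDegree ≤ k → (∑ i : Fin (q.natDegree + p.natDegree),
      if q.natDegree ≤ (i : ℕ) then C (c i) * X ^ ((i : ℕ) - q.natDegree) else 0).coeff k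
      = 0 := by
    intro k hk
    rw [finset_sum_coeff]
    refine Finset.sum_eq_zero fun i _ => ?_
    have hi := i.isLt
    by_cases h : q.natDegree ≤ (i : ℕ)
    · rw [if_pos h, coeff_C_mul, coeff_X_pow]
      have hne : ¬ (k = (i : ℕ) - q.natDegree) := by omega
      rw [if_neg hne, mul_zero]
    · rw [if_neg h, coeff_zero]
  have hpdvd : p ∣ (∑ i : Fin (q.natDegree + p.natDegree),
      if q.natDegree ≤ (i : ℕ) then C (c i) * X ^ ((i : ℕ) - q.natDegree) else 0) * q :=
    ⟨-(∑ i : Fin (q.natDegree + p.natDegree),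
      if (i : ℕ) < q.natDegree then C (c i) * X ^ (i : ℕ) else 0), by linear_combination key⟩
  have hpv : p ∣ (∑ i : Fin (q.natDegree + p.natDegree),
      if q.natDegree ≤ (i : ℕ) then C (c i) * X ^ ((i : ℕ) - q.natDegree) else 0) :=
    hco.dvd_of_dvd_mul_right hpdvd
  have hv0 : (∑ i : Fin (q.natDegree + p.natDegree),
      if q.natDegree ≤ (i : ℕ) then C (c i) * X ^ ((i : ℕ) - q.natDegree) else 0) = 0 := by
    by_contra hvne
    have h1 : p.natDegree ≤ (∑ i : Fin (q.natDegree + p.natDegree),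
        if q.natDegree ≤ (i : ℕ) then C (c i) * X ^ ((i : ℕ) - q.natDegree)
          else 0).natDegree := natDegree_le_of_dvd hpv hvne
    exact hvne (leadingCoeff_eq_zero.1 (hvcoeff _ h1))
  have hu0 : (∑ i : Fin (q.natDegree + p.natDegree),
      if (i : ℕ) < q.natDegree then C (c i) * X ^ (i : ℕ) else 0) = 0 := by
    rw [hv0, zero_mul, add_zero, mul_eq_zero] at key
    exact key.resolve_right hp
  apply hc0
  funext i
  rcases lt_or_ge (i : ℕ) q.natDegree with h | h
  · have hui : (∑ b : Fin (q.natDegree + p.natDegree),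
        if (b : ℕ) < q.natDegree then C (c b) * X ^ (b : ℕ) else 0).coeff (i : ℕ) = c i := by
      rw [finset_sum_coeff, Finset.sum_eq_single i]
      · rw [if_pos h, coeff_C_mul, coeff_X_pow, if_pos rfl, mul_one]
      · intro b _ hbne
        by_cases hb : (b : ℕ) < q.natDegree
        · rw [if_pos hb, coeff_C_mul, coeff_X_pow]
          have hne : ¬ ((i : ℕ) = (b : ℕ)) := fun hEq => hbne (Fin.ext hEq.symm)
          rw [if_neg hne, mul_zero]
        · rw [if_neg hb, coeff_zero]
      · intro hni
        exact absurd (Finset.mem_univ i) hni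
    rw [← hui, hu0, coeff_zero, Pi.zero_apply]
  · have hvi : (∑ b : Fin (q.natDegree + p.natDegree),
        if q.natDegree ≤ (b : ℕ) then C (c b) * X ^ ((b : ℕ) - q.natDegree)
          else 0).coeff ((i : ℕ) - q.natDegree) = c i := by
      rw [finset_sum_coeff, Finset.sum_eq_single i]
      · rw [if_pos h, coeff_C_mul, coeff_X_pow, if_pos rfl, mul_one]
      · intro b _ hbne
        by_cases hb : q.natDegree ≤ (b : ℕ)
        · rw [if_pos hb, coeff_C_mul, coeff_X_pow]
          have hib := i.isLt
          have hbb := b.isLt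
          have hne : ¬ ((i : ℕ) - q.natDegree = (b : ℕ) - q.natDegree) := by
            intro hEq
            exact hbne (Fin.ext (by omega))
          rw [if_neg hne, mul_zero]
        · rw [if_neg hb, coeff_zero]
      · intro hni
        exact absurd (Finset.mem_univ i) hni
    rw [← hvi, hv0, coeff_zero, Pi.zero_apply]

/-- If `a ≥ 1`, `d ≥ 1`, not both `a = 1` and `d = 1`, `b ≥ 0`, `e ≥ 1`, not both
`b = 0` and `e = 1`, with `3 ∤ d`, `3 ∤ e`, then `Φ_{3^a d}(X)` and
`Φ_{3^b e}(-X²-X)` have no common complex root, and their resultant is nonzero. -/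
theorem stmt11 (a d b e : ℕ) (ha : 1 ≤ a) (hd : 1 ≤ d) (had : ¬(a = 1 ∧ d = 1))
    (he : 1 ≤ e) (hbe : ¬(b = 0 ∧ e = 1)) (h3d : ¬ 3 ∣ d) (h3e : ¬ 3 ∣ e) :
    (¬ ∃ z : ℂ, (cyclotomic (3 ^ a * d) ℂ).eval z = 0 ∧
        ((cyclotomic (3 ^ b * e) ℂ).comp (-X ^ 2 - X)).eval z = 0) ∧
    sylvesterResultant (cyclotomic (3 ^ a * d) ℤ)
        ((cyclotomic (3 ^ b * e) ℤ).comp (-X ^ 2 - X)) ≠ 0 := by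
  have hN1 : (3 : ℕ) ^ a * d ≠ 0 := Nat.mul_ne_zero (pow_ne_zero a (by norm_num)) (by omega)
  have hN2 : (3 : ℕ) ^ b * e ≠ 0 := Nat.mul_ne_zero (pow_ne_zero b (by norm_num)) (by omega)
  haveI : NeZero (((3 : ℕ) ^ a * d : ℕ) : ℂ) := ⟨Nat.cast_ne_zero.2 hN1⟩
  haveI : NeZero (((3 : ℕ) ^ b * e : ℕ) : ℂ) := ⟨Nat.cast_ne_zero.2 hN2⟩
  have noroot : ¬ ∃ z : ℂ, (cyclotomic (3 ^ a * d) ℂ).eval z = 0 ∧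
      ((cyclotomic (3 ^ b * e) ℂ).comp (-X ^ 2 - X)).eval z = 0 := by
    rintro ⟨z, hz1, hz2⟩
    rw [eval_comp] at hz2
    have hprim1 : IsPrimitiveRoot z (3 ^ a * d) := isRoot_cyclotomic_iff.1 hz1
    have hprim2 : IsPrimitiveRoot ((-X ^ 2 - X : Polynomial ℂ).eval z) (3 ^ b * e) :=
      isRoot_cyclotomic_iff.1 hz2
    have hw : IsPrimitiveRoot (-z ^ 2 - z) (3 ^ b * e) := by simpa using hprim2
    have habsz : ‖z‖ = 1 := hprim1.norm'_eq_one hN1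
    have habsw : ‖-z ^ 2 - z‖ = 1 := hw.norm'_eq_one hN2
    have habs1 : ‖z + 1‖ = 1 := by
      have heq : -z ^ 2 - z = -(z * (z + 1)) := by ring
      rw [heq, norm_neg, norm_mul, habsz, one_mul] at habsw
      exact habsw
    have h1 : z * (starRingEnd ℂ) z = 1 := by
      rw [Complex.mul_conj]
      norm_cast
      rw [Complex.normSq_eq_norm_sq, habsz, one_pow]
    have h2 : (z + 1) * ((starRingEnd ℂ) z + 1) = 1 := by
      have hmc := Complex.mul_conj (z + 1)
      rw [map_add, map_one] at hmc
      rw [hmc, Complex.normSq_eq_norm_sq, habs1]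
      norm_num
    have hcz : (starRingEnd ℂ) z = -1 - z := by linear_combination h2 - h1
    have h3 : z ^ 2 + z + 1 = 0 := by linear_combination z * hcz - h1
    have hz3 : z ^ 3 = 1 := by linear_combination (z - 1) * h3
    have hdvd : (3 : ℕ) ^ a * d ∣ 3 := (hprim1.pow_eq_one_iff_dvd 3).1 hz3
    have h3a : (3 : ℕ) ^ a ∣ 3 ^ 1 := by
      have hstep : (3 : ℕ) ^ a ∣ 3 ^ a * d := dvd_mul_right _ _
      simpa using hstep.trans hdvd
    have ha1 : a = 1 := le_antisymm ((Nat.pow_dvd_pow_iff_le_right (by norm_num)).1 h3a) ha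
    have hd1 : d = 1 := by
      subst ha1
      have := Nat.le_of_dvd (by norm_num) hdvd
      omega
    exact had ⟨ha1, hd1⟩
  refine ⟨noroot, ?_⟩
  set f := Int.castRingHom ℂ with hf
  have hmapP : (cyclotomic (3 ^ a * d) ℤ).map f = cyclotomic (3 ^ a * d) ℂ :=
    map_cyclotomic _ f
  have hmapQ : ((cyclotomic (3 ^ b * e) ℤ).comp (-X ^ 2 - X)).map f
      = (cyclotomic (3 ^ b * e) ℂ).comp (-X ^ 2 - X) := by
    rw [Polynomial.map_comp, map_cyclotomic]
    congr 1
    simp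
  have hPdeg : ((cyclotomic (3 ^ a * d) ℤ).map f).natDegree
      = (cyclotomic (3 ^ a * d) ℤ).natDegree := by
    rw [hmapP, natDegree_cyclotomic, natDegree_cyclotomic]
  have hdegX : (-X ^ 2 - X : Polynomial ℤ).natDegree = 2 := by
    compute_degree!
  have hdegXC : (-X ^ 2 - X : Polynomial ℂ).natDegree = 2 := by
    compute_degree!
  have hQdeg : (((cyclotomic (3 ^ b * e) ℤ).comp (-X ^ 2 - X)).map f).natDegree
      = ((cyclotomic (3 ^ b * e) ℤ).comp (-X ^ 2 - X)).natDegree := by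
    rw [hmapQ, natDegree_comp, natDegree_comp, natDegree_cyclotomic, natDegree_cyclotomic,
      hdegX, hdegXC]
  have hcast : (f (sylvesterResultant (cyclotomic (3 ^ a * d) ℤ)
        ((cyclotomic (3 ^ b * e) ℤ).comp (-X ^ 2 - X))) : ℂ)
      = sylvesterResultant (cyclotomic (3 ^ a * d) ℂ)
        ((cyclotomic (3 ^ b * e) ℂ).comp (-X ^ 2 - X)) := by
    rw [sylvesterResultant_map f _ _ hPdeg hQdeg, hmapP, hmapQ]
  have hPne : cyclotomic (3 ^ a * d) ℂ ≠ 0 := cyclotomic_ne_zero _ ℂ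
  have hco : IsCoprime (cyclotomic (3 ^ a * d) ℂ)
      ((cyclotomic (3 ^ b * e) ℂ).comp (-X ^ 2 - X)) := by
    by_contra hnco
    classical
    rw [← EuclideanDomain.gcd_isUnit_iff] at hnco
    set g := EuclideanDomain.gcd (cyclotomic (3 ^ a * d) ℂ)
      ((cyclotomic (3 ^ b * e) ℂ).comp (-X ^ 2 - X)) with hg
    have hgne : g ≠ 0 := by
      intro hg0
      exact hPne (EuclideanDomain.gcd_eq_zero_iff.1 hg0).1
    have hgdeg : g.degree ≠ 0 := fun hdeg => hnco (isUnit_iff_degree_eq_zero.2 hdeg)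
    obtain ⟨z, hzroot⟩ := IsAlgClosed.exists_root g hgdeg
    exact noroot ⟨z,
      eval_eq_zero_of_dvd_of_eval_eq_zero (EuclideanDomain.gcd_dvd_left _ _) hzroot,
      eval_eq_zero_of_dvd_of_eval_eq_zero (EuclideanDomain.gcd_dvd_right _ _) hzroot⟩
  have hne := sylvesterResultant_ne_zero_of_isCoprime hPne hco
  intro h0
  rw [h0] at hcast
  simp only [map_zero] at hcast
  exact hne hcast.symm
end

section
/- For every x ≥ 2, the number of primes ℓ ≤ x such that ℓ ≡ 1 (mod 3) and ℓ ≤ 441·2^{4α}·β⁴, where ℓ − 1 = 2^α·3^β·m with gcd(m,6) = 1 and β ≤ log x, is O(x^{3/4}(log x)³). -/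
set_option maxHeartbeats 1000000

open Real

private lemma factor_eq (n : ℕ) :
    2 ^ n.factorization 2 * 3 ^ n.factorization 3 *
      (n / (2 ^ n.factorization 2 * 3 ^ n.factorization 3)) = n := by
  have h2 : 2 ^ n.factorization 2 ∣ n := Nat.ordProj_dvd n 2
  have h3 : 3 ^ n.factorization 3 ∣ n := Nat.ordProj_dvd n 3
  have hc : Nat.Coprime (2 ^ n.factorization 2) (3 ^ n.factorization 3) :=
    Nat.Coprime.pow _ _ (by norm_num)
  exact Nat.mul_div_cancel' (hc.mul_dvd_of_dvd_of_dvd h2 h3)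

/-- The number of primes `ℓ ≤ x` with `ℓ ≡ 1 (mod 3)` satisfying
`ℓ ≤ 441·2^{4α}·β⁴` (where `ℓ - 1 = 2^α 3^β m`, `gcd(m,6) = 1`) and `β ≤ log x`
is `O(x^{3/4} (log x)³)`. -/
theorem stmt16 :
    ∃ C : ℝ, 0 < C ∧ ∀ x : ℝ, 2 ≤ x →
      (Nat.card {ℓ : ℕ | ℓ.Prime ∧ (ℓ : ℝ) ≤ x ∧ ℓ % 3 = 1 ∧
          ((ℓ - 1).factorization 3 : ℝ) ≤ Real.log x ∧
          (ℓ : ℝ) ≤ 441 * 2 ^ (4 * (ℓ - 1).factorization 2)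
            * ((ℓ - 1).factorization 3 : ℝ) ^ 4} : ℝ)
        ≤ C * x ^ ((3 : ℝ) / 4) * (Real.log x) ^ 3 := by
  refine ⟨84, by norm_num, fun x hx => ?_⟩
  have hx0 : (0:ℝ) < x := by linarith
  set L : ℝ := Real.log x with hLdef
  have hlog2 : (0.6931471803:ℝ) < Real.log 2 := Real.log_two_gt_d9
  have hL : (1:ℝ)/2 ≤ L := by
    have : Real.log 2 ≤ L := Real.log_le_log (by norm_num) hx
    linarith
  have hxr1 : (1:ℝ) ≤ x ^ ((3:ℝ)/4) :=
    Real.one_le_rpow (by linarith) (by norm_num)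
  have hxr0 : (0:ℝ) < x ^ ((3:ℝ)/4) := by linarith
  have hxr4 : (x ^ ((3:ℝ)/4)) ^ (4:ℕ) = x ^ (3:ℕ) := by
    rw [← Real.rpow_natCast (x ^ ((3:ℝ)/4)) 4, ← Real.rpow_mul hx0.le,
      ← Real.rpow_natCast x 3]
    norm_num
  set A : ℕ := ⌊2 * L⌋₊ + 1 with hA
  set B : ℕ := ⌊L⌋₊ + 1 with hB
  set M : ℕ := ⌊5 * x ^ ((3:ℝ)/4) * L⌋₊ + 1 with hM
  set S : Set ℕ := {ℓ : ℕ | ℓ.Prime ∧ (ℓ : ℝ) ≤ x ∧ ℓ % 3 = 1 ∧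
          ((ℓ - 1).factorization 3 : ℝ) ≤ Real.log x ∧
          (ℓ : ℝ) ≤ 441 * 2 ^ (4 * (ℓ - 1).factorization 2)
            * ((ℓ - 1).factorization 3 : ℝ) ^ 4} with hS
  set f : ℕ → ℕ × ℕ × ℕ := fun ℓ =>
    ((ℓ - 1).factorization 2, (ℓ - 1).factorization 3,
      (ℓ - 1) / (2 ^ (ℓ - 1).factorization 2 * 3 ^ (ℓ - 1).factorization 3)) with hf
  set T : Finset (ℕ × ℕ × ℕ) := Finset.range A ×ˢ Finset.range B ×ˢ Finset.range M with hT
  -- key facts for each ℓ ∈ S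
  have hfacts : ∀ ℓ ∈ S, (ℓ - 1).factorization 2 < A ∧ (ℓ - 1).factorization 3 < B ∧
      (ℓ - 1) / (2 ^ (ℓ - 1).factorization 2 * 3 ^ (ℓ - 1).factorization 3) < M := by
    intro ℓ hℓ
    obtain ⟨hp, hℓx, -, hβL, hkey⟩ := hℓ
    set α := (ℓ - 1).factorization 2 with hα
    set β := (ℓ - 1).factorization 3 with hβ
    set m := (ℓ - 1) / (2 ^ α * 3 ^ β) with hm
    have h2ℓ : 2 ≤ ℓ := hp.two_le
    have hn0 : ℓ - 1 ≠ 0 := by omega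
    have heq : 2 ^ α * 3 ^ β * m = ℓ - 1 := factor_eq (ℓ - 1)
    have h2le : (2:ℕ) ^ α ≤ ℓ - 1 := Nat.ordProj_le 2 hn0
    -- bound on α
    have hαA : α < A := by
      have h1 : ((2:ℝ)) ^ α ≤ x := by
        have : ((2:ℕ) ^ α : ℝ) ≤ ((ℓ - 1 : ℕ) : ℝ) := by exact_mod_cast h2le
        have h2 : ((ℓ - 1 : ℕ) : ℝ) ≤ (ℓ : ℝ) := by exact_mod_cast Nat.sub_le ℓ 1
        push_cast at this
        linarith
      have h2 : (α : ℝ) * Real.log 2 ≤ L := by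
        have := Real.log_le_log (by positivity) h1
        rwa [Real.log_pow] at this
      have h3 : (α : ℝ) ≤ 2 * L := by
        nlinarith [Nat.cast_nonneg (α := ℝ) α]
      have : α ≤ ⌊2 * L⌋₊ := Nat.le_floor h3
      omega
    have hβB : β < B := by
      have : β ≤ ⌊L⌋₊ := Nat.le_floor hβL
      omega
    refine ⟨hαA, hβB, ?_⟩
    -- bound on m
    have hml : (m : ℝ) * 2 ^ α < (ℓ : ℝ) := by
      have h1 : m * 2 ^ α ≤ ℓ - 1 := by
        calc m * 2 ^ α ≤ m * (2 ^ α * 3 ^ β) := by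
              have : (1:ℕ) ≤ 3 ^ β := Nat.one_le_pow _ _ (by norm_num)
              nlinarith
          _ = ℓ - 1 := by rw [← heq]; ring
      have h2 : ℓ - 1 < ℓ := by omega
      have := h1.trans_lt h2
      calc (m : ℝ) * 2 ^ α = ((m * 2 ^ α : ℕ) : ℝ) := by push_cast; ring
        _ < (ℓ : ℝ) := by exact_mod_cast this
    have hm4 : (m : ℝ) ^ 4 * (2 ^ α : ℝ) ^ 4 < (ℓ : ℝ) ^ 4 := by
      have h0 : (0:ℝ) ≤ (m : ℝ) * 2 ^ α := by positivity
      calc (m : ℝ) ^ 4 * (2 ^ α : ℝ) ^ 4 = ((m : ℝ) * 2 ^ α) ^ 4 := by ring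
        _ < (ℓ : ℝ) ^ 4 := by
            exact pow_lt_pow_left₀ hml h0 (by norm_num)
    have hℓ4 : (ℓ : ℝ) ^ 4 ≤ (ℓ : ℝ) ^ 3 * (441 * 2 ^ (4 * α) * (β : ℝ) ^ 4) := by
      have h0 : (0:ℝ) ≤ (ℓ : ℝ) ^ 3 := by positivity
      nlinarith
    have h2pow : ((2:ℝ) ^ α) ^ 4 = (2:ℝ) ^ (4 * α) := by
      rw [← pow_mul]; ring_nf
    have hmle : (m : ℝ) ^ 4 < 441 * (ℓ : ℝ) ^ 3 * (β : ℝ) ^ 4 := by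
      have hp2 : (0:ℝ) < (2:ℝ) ^ (4 * α) := by positivity
      rw [h2pow] at hm4
      nlinarith
    have hℓ3 : (ℓ : ℝ) ^ 3 ≤ x ^ 3 :=
      pow_le_pow_left₀ (by positivity) hℓx 3
    have hβ4 : (β : ℝ) ^ 4 ≤ L ^ 4 :=
      pow_le_pow_left₀ (by positivity) hβL 4
    have hfinal : (m : ℝ) ^ 4 < (5 * x ^ ((3:ℝ)/4) * L) ^ 4 := by
      have hL0 : (0:ℝ) ≤ L := by linarith
      have hx3 : (0:ℝ) ≤ x ^ 3 := by positivity
      have hrhs : (5 * x ^ ((3:ℝ)/4) * L) ^ 4 = 625 * x ^ (3:ℕ) * L ^ 4 := by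
        rw [show (5 * x ^ ((3:ℝ)/4) * L) ^ 4
          = 625 * (x ^ ((3:ℝ)/4)) ^ (4:ℕ) * L ^ 4 by ring, hxr4]
      rw [hrhs]
      have hstep : (ℓ:ℝ) ^ 3 * (β:ℝ) ^ 4 ≤ x ^ (3:ℕ) * L ^ 4 :=
        mul_le_mul hℓ3 hβ4 (by positivity) (by positivity)
      have hpos : (0:ℝ) ≤ x ^ (3:ℕ) * L ^ 4 := by positivity
      nlinarith [hmle, hstep, hpos]
    have hmlt : (m : ℝ) < 5 * x ^ ((3:ℝ)/4) * L := by
      refine lt_of_pow_lt_pow_left₀ 4 (by positivity) hfinal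
    have : m ≤ ⌊5 * x ^ ((3:ℝ)/4) * L⌋₊ := Nat.le_floor hmlt.le
    omega
  -- injectivity
  have hinj : Set.InjOn f S := by
    intro a ha b hb hab
    have heqa := factor_eq (a - 1)
    have heqb := factor_eq (b - 1)
    have h2a := ha.1.two_le
    have h2b := hb.1.two_le
    simp only [hf, Prod.mk.injEq] at hab
    obtain ⟨h1, h2, h3⟩ := hab
    rw [h1, h2] at h3
    rw [h1, h2, h3, heqb] at heqa
    omega
  have hmaps : Set.MapsTo f S (↑T : Set (ℕ × ℕ × ℕ)) := by
    intro ℓ hℓ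
    obtain ⟨h1, h2, h3⟩ := hfacts ℓ hℓ
    simp only [hT, Finset.coe_product, Set.mem_prod, Finset.mem_coe, Finset.mem_range, hf]
    exact ⟨h1, h2, h3⟩
  have hcard : Nat.card S ≤ A * B * M := by
    have := Set.ncard_le_ncard_of_injOn f hmaps hinj (T.finite_toSet)
    rw [Set.ncard_coe_finset] at this
    rw [Nat.card_coe_set_eq]
    refine this.trans ?_
    simp [hT, Finset.card_product, mul_assoc]
  -- final arithmetic
  have hAle : (A : ℝ) ≤ 4 * L := by
    have := Nat.floor_le (by linarith : (0:ℝ) ≤ 2 * L)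
    push_cast [hA]
    linarith
  have hBle : (B : ℝ) ≤ 3 * L := by
    have := Nat.floor_le (by linarith : (0:ℝ) ≤ L)
    push_cast [hB]
    linarith
  have hMle : (M : ℝ) ≤ 7 * x ^ ((3:ℝ)/4) * L := by
    have h0 : (0:ℝ) ≤ 5 * x ^ ((3:ℝ)/4) * L := by positivity
    have := Nat.floor_le h0
    have h1 : (1:ℝ) ≤ 2 * x ^ ((3:ℝ)/4) * L := by nlinarith
    push_cast [hM]
    linarith
  have hcast : (Nat.card S : ℝ) ≤ (A : ℝ) * B * M := by
    exact_mod_cast Nat.cast_le.mpr hcard |>.trans_eq (by push_cast; ring)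
  have hL0 : (0:ℝ) ≤ L := by linarith
  calc (Nat.card S : ℝ) ≤ (A : ℝ) * B * M := hcast
    _ ≤ (4 * L) * (3 * L) * (7 * x ^ ((3:ℝ)/4) * L) := by
        have hB0 : (0:ℝ) ≤ B := Nat.cast_nonneg B
        have hM0 : (0:ℝ) ≤ M := Nat.cast_nonneg M
        have h1 : (A:ℝ) * B ≤ (4 * L) * (3 * L) :=
          mul_le_mul hAle hBle hB0 (by linarith)
        exact mul_le_mul h1 hMle hM0 (by positivity)
    _ = 84 * x ^ ((3:ℝ)/4) * L ^ 3 := by ring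
end
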